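/- Let p be a prime, f a positive integer, q = p^f, let r be a prime dividing q − 1, and let m ≥ 1 be an integer. Then (p−1)·v_p( ∏_{i=1}^m (r^{2i} − 1) ) ≤ ε_q·r^m − 1, where ε_q = 4/3 if p = 2 and f is even, ε_q = p/(p−1) if p is a Fermat prime, and ε_q = 1 otherwise. -/

import Mathlib

/-- A composition series of a group `G`: an ascending chain of subgroups from `⊥` to `⊤`
in which each term is normal in the next, with simple quotients. -/
structure GroupCompSeries (G : Type*) [Group G] where
  len : ℕ
  ser : Fin (len + 1) → Subgroup G
  ser_bot : ser 0 = ⊥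
  ser_top : ser (Fin.last len) = ⊤
  ser_le : ∀ i : Fin len, ser i.castSucc ≤ ser i.succ
  ser_normal : ∀ i : Fin len, ((ser i.castSucc).subgroupOf (ser i.succ)).Normal
  ser_simple : ∀ i : Fin len,
    haveI := ser_normal i
    IsSimpleGroup (↥(ser i.succ) ⧸ (ser i.castSucc).subgroupOf (ser i.succ))

/-- The number of factors of order `p` in a composition series. -/
noncomputable def GroupCompSeries.count {G : Type*} [Group G]
    (S : GroupCompSeries G) (p : ℕ) : ℕ := by
  classical
  exact (Finset.univ.filter fun i : Fin S.len =>
    Nat.card (↥(S.ser i.succ) ⧸ (S.ser i.castSucc).subgroupOf (S.ser i.succ)) = p).card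

/-- `cp p G` is the number of composition factors of `G` of order `p`, counted with
multiplicity in a composition series (well defined by Jordan–Hölder). -/
noncomputable def cp (p : ℕ) (G : Type*) [Group G] : ℕ := by
  classical
  exact if h : Nonempty (GroupCompSeries G) then h.some.count p else 0

/-- The constant `ε_q` of Theorem 1, for `q = p ^ f`. -/
noncomputable def epsq (p f : ℕ) : ℚ := by
  classical
  exact if p = 2 ∧ Even f then 4 / 3
    else if ∃ n : ℕ, p = 2 ^ 2 ^ n + 1 then p / (p - 1)
    else 1

/-- A subgroup of `GL(d, F)` acts irreducibly on its natural module. -/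
def natIrreducible {F : Type*} [Field F] {d : ℕ}
    (G : Subgroup (Matrix.GeneralLinearGroup (Fin d) F)) : Prop :=
  (⊥ : Submodule F (Fin d → F)) ≠ ⊤ ∧
  ∀ W : Submodule F (Fin d → F),
    (∀ g ∈ G, ∀ v ∈ W, Matrix.mulVec (g : Matrix (Fin d) (Fin d) F) v ∈ W) →
      W = ⊥ ∨ W = ⊤


open Finset Nat

lemma auxN2 {k b : ℕ} (hk : 1 ≤ k) (hb : 2 ≤ b) : k ≤ b ^ (k - 1) := by
  induction k with
  | zero => omega
  | succ n ih =>
    rcases Nat.lt_or_ge n 1 with h | h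
    · interval_cases n
      · simpa using Nat.one_le_iff_ne_zero.mpr (by positivity)
    · have h1 := ih h
      have h2 : b ^ (n - 1) * 2 ≤ b ^ (n - 1) * b := Nat.mul_le_mul_left _ hb
      have h3 : b ^ (n - 1) * b = b ^ n := by
        rw [← pow_succ]; congr 1; omega
      have h4 : (n + 1 : ℕ) - 1 = n := rfl
      rw [h4]
      omega

lemma auxN1 {k s : ℕ} (hk : 1 ≤ k) (hs : 2 ≤ s) : k * (s - 1) ≤ s ^ k := by
  have h1 : k ≤ s ^ (k-1) := auxN2 hk hs
  have h2 : k * (s-1) ≤ s ^ (k-1) * (s-1) := Nat.mul_le_mul_right _ h1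
  have h3 : s ^ (k-1) * (s-1) ≤ s ^ (k-1) * s := Nat.mul_le_mul_left _ (by omega)
  have h4 : s ^ (k-1) * s = s ^ k := by rw [← pow_succ]; congr 1; omega
  omega

lemma auxN2' {k s : ℕ} (hk : 1 ≤ k) (hs : 2 ≤ s) : k * s ≤ s ^ k := by
  have h1 : k ≤ s ^ (k-1) := auxN2 hk hs
  have h2 : k * s ≤ s ^ (k-1) * s := Nat.mul_le_mul_right _ h1
  have h4 : s ^ (k-1) * s = s ^ k := by rw [← pow_succ]; congr 1; omega
  omega

lemma auxL2 {r : ℕ} (hr : 5 ≤ r) : r ^ 2 - 1 < 2 ^ r := by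
  induction r, hr using Nat.le_induction with
  | base => norm_num
  | succ n hn ih =>
    have h1 : 2 ^ (n+1) = 2 * 2 ^ n := by ring
    have e1 : (n+1)^2 = n^2 + 2*n + 1 := by ring
    have e2 : 2*n + 2 ≤ n^2 := by nlinarith
    omega

lemma auxL3 (q e : ℕ) : e * q + 1 ≤ (q + 1) ^ e := by
  induction e with
  | zero => simp
  | succ n ih =>
    have h : (q+1)^(n+1) = (q+1)^n * q + (q+1)^n := by ring
    have h2 : q ≤ (q+1)^n * q := Nat.le_mul_of_pos_left _ (by positivity)
    nlinarith

lemma auxL4 {q e : ℕ} (hq : 2 ≤ q) (he : 2 ≤ e) : e * q + 5 ≤ (q + 1) ^ e := by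
  induction e, he using Nat.le_induction with
  | base => nlinarith
  | succ n hn ih =>
    have h : (q+1)^(n+1) = (q+1)^n * q + (q+1)^n := by ring
    have h2 : q ≤ (q+1)^n * q := Nat.le_mul_of_pos_left _ (by positivity)
    nlinarith

lemma aux_sum_mult (f : ℕ → ℕ) (d : ℕ) (hd : 0 < d)
    (hf : ∀ i, 1 ≤ i → ¬ d ∣ i → f i = 0) (m : ℕ) :
    ∑ i ∈ Icc 1 m, f i = ∑ j ∈ Icc 1 (m / d), f (d * j) := by
  induction m with
  | zero => simp [Nat.zero_div]
  | succ n ih =>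
    rw [Finset.sum_Icc_succ_top (by omega : 1 ≤ n + 1), ih]
    by_cases h : d ∣ n + 1
    · rw [Nat.succ_div_of_dvd h,
        Finset.sum_Icc_succ_top (Nat.succ_le_succ (Nat.zero_le _))]
      have h3 : d * (n / d + 1) = n + 1 := by
        have := Nat.div_mul_cancel h
        have h2 : (n+1)/d = n/d + 1 := Nat.succ_div_of_dvd h
        rw [h2] at this
        rw [mul_comm]
        exact this
      rw [h3]
    · rw [Nat.succ_div_of_not_dvd h, hf (n+1) (by omega) h, add_zero]

lemma aux_sum_padic (p : ℕ) [Fact p.Prime] (k : ℕ) :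
    ∑ j ∈ Icc 1 k, padicValNat p j = padicValNat p k.factorial := by
  induction k with
  | zero => simp
  | succ n ih =>
    rw [Finset.sum_Icc_succ_top (by omega : 1 ≤ n + 1), ih, Nat.factorial_succ,
      padicValNat.mul (by omega) (Nat.factorial_ne_zero n), add_comm]

lemma aux_digit_sum_pos (p k : ℕ) (hk : k ≠ 0) : 1 ≤ (p.digits k).sum := by
  have hne : p.digits k ≠ [] := Nat.digits_ne_nil_iff_ne_zero.mpr hk
  have hlast := Nat.getLast_digit_ne_zero p hk
  have hmem := List.getLast_mem hne
  calc 1 ≤ (p.digits k).getLast hne := by omega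
  _ ≤ (p.digits k).sum := List.single_le_sum (fun x _ => Nat.zero_le x) _ hmem

lemma aux_fact_bound (p k : ℕ) [hp : Fact p.Prime] (hk : 1 ≤ k) :
    (p - 1) * padicValNat p k.factorial ≤ k - 1 := by
  rw [sub_one_mul_padicValNat_factorial]
  have := aux_digit_sum_pos p k (by omega)
  omega

lemma epsq_one_le (p f : ℕ) (hp : 2 ≤ p) : 1 ≤ epsq p f := by
  unfold epsq
  split_ifs with h1 h2
  · norm_num
  · have h3 : (2:ℚ) ≤ p := by exact_mod_cast hp
    rw [le_div_iff₀ (by linarith)]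
    linarith
  · exact le_refl _

lemma epsq_fermat (p f : ℕ) (hp : p ≠ 2) (h : ∃ n : ℕ, p = 2 ^ 2 ^ n + 1) :
    epsq p f = p / (p - 1) := by
  unfold epsq
  rw [if_neg (by tauto), if_pos h]

lemma epsq_two_even (f : ℕ) (hf : Even f) : epsq 2 f = 4 / 3 := by
  unfold epsq
  rw [if_pos ⟨rfl, hf⟩]

lemma aux_final (p r m f V : ℕ) (hp1 : 1 ≤ p) (hr1 : 1 ≤ r)
    (hV : (p - 1) * V ≤ r ^ m - 1) (hrm : 1 ≤ r ^ m) (heps : 1 ≤ epsq p f) :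
    ((p:ℚ) - 1) * V ≤ epsq p f * (r:ℚ) ^ m - 1 := by
  have hc1 : (((p-1) * V : ℕ) : ℚ) = ((p:ℚ)-1) * V := by
    rw [Nat.cast_mul, Nat.cast_sub hp1]; push_cast; ring
  rw [← hc1]
  have hc2 : (((r^m - 1 : ℕ)) : ℚ) = (r:ℚ)^m - 1 := by
    rw [Nat.cast_sub hrm]; push_cast; ring
  have h3 : (((p-1)*V : ℕ) : ℚ) ≤ (((r^m - 1 : ℕ)) : ℚ) := Nat.cast_le.mpr hV
  have h4 : (1:ℚ) ≤ (r:ℚ)^m := by exact_mod_cast hrm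
  nlinarith [h4, heps]

lemma aux_dvd_iff (p r : ℕ) [hp : Fact p.Prime] (hr : 2 ≤ r) (hpr : ¬ p ∣ r) (n : ℕ) :
    p ∣ r ^ n - 1 ↔ orderOf (r : ZMod p) ∣ n := by
  have h1 : 1 ≤ r ^ n := Nat.one_le_pow _ _ (by omega)
  rw [← ZMod.natCast_eq_zero_iff, Nat.cast_sub h1]
  push_cast
  rw [sub_eq_zero]
  exact ⟨fun h => orderOf_dvd_of_pow_eq_one h,
    fun h => orderOf_dvd_iff_pow_eq_one.mp h⟩

lemma aux_ord_pos (p r : ℕ) [hp : Fact p.Prime] (hpr : ¬ p ∣ r) :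
    0 < orderOf (r : ZMod p) := by
  have hne : (r : ZMod p) ≠ 0 := by
    rw [Ne, ZMod.natCast_eq_zero_iff]; exact hpr
  have h : IsOfFinOrder (r : ZMod p) := by
    rw [isOfFinOrder_iff_pow_eq_one]
    exact ⟨p - 1, by have := hp.out.two_le; omega, ZMod.pow_card_sub_one_eq_one hne⟩
  exact h.orderOf_pos

lemma aux_key (p r : ℕ) [hp : Fact p.Prime] (hodd : Odd p) (hr : 2 ≤ r) (hpr : ¬ p ∣ r) :
    ∃ d' e : ℕ, 0 < d' ∧ 1 ≤ e ∧
      (∀ i : ℕ, (p ∣ r ^ (2*i) - 1 ↔ d' ∣ i)) ∧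
      (∀ j, 1 ≤ j → padicValNat p (r ^ (2*(d'*j)) - 1) = e + padicValNat p j) ∧
      (e * (p-1) + 1 ≤ r ^ d' - 1 ∨ (e = 1 ∧ p = r ^ d' + 1)) := by
  have hp3 : 3 ≤ p := by
    have h2 := hp.out.two_le
    rcases hodd with ⟨t, ht⟩; omega
  set d := orderOf (r : ZMod p) with hd
  have hd0 : 0 < d := aux_ord_pos p r hpr
  have hiff := aux_dvd_iff p r hr hpr
  have h2rd : 2 ≤ r ^ d := Nat.one_lt_pow hd0.ne' (by omega)
  set e := padicValNat p (r ^ d - 1) with he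
  have hpd : p ∣ r ^ d - 1 := (hiff d).mpr dvd_rfl
  have he1 : 1 ≤ e := one_le_padicValNat_of_dvd (by omega) hpd
  have hpe : p ^ e ∣ r ^ d - 1 := pow_padicValNat_dvd
  have hple : p ^ e ≤ r ^ d - 1 := Nat.le_of_dvd (by omega) hpe
  have hpx : ¬ p ∣ r ^ d := fun h => hpr (hp.out.prime.dvd_of_dvd_pow h)
  have hL3 : e * (p-1) + 1 ≤ p ^ e := by
    have h := auxL3 (p-1) e
    rwa [show p - 1 + 1 = p by omega] at h
  rcases Nat.even_or_odd d with hde | hdo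
  · -- d even
    obtain ⟨d', hd'⟩ := hde
    have hdd : d = 2 * d' := by omega
    have hd'0 : 0 < d' := by omega
    refine ⟨d', e, hd'0, he1, ?_, ?_, ?_⟩
    · intro i
      rw [hiff (2*i), ← hd, hdd]
      exact Nat.mul_dvd_mul_iff_left (by norm_num : (0:ℕ) < 2)
    · intro j hj
      have h1 : r ^ (2*(d'*j)) - 1 = (r^d)^j - 1^j := by
        rw [one_pow, ← pow_mul, hdd]; ring_nf
      rw [h1, padicValNat.pow_sub_pow hodd (by omega : (1:ℕ) < r^d)
        (by simpa using hpd) hpx (by omega : j ≠ 0)]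
    · -- key inequality
      set s := r ^ d' with hs
      have hs2 : 2 ≤ s := Nat.one_lt_pow hd'0.ne' (by omega)
      have hsq : (s - 1) * (s + 1) = r ^ d - 1 := by
        have h1 : r ^ d = s * s := by rw [hdd, two_mul, pow_add]
        rw [h1]
        zify [show 1 ≤ s by omega, show 1 ≤ s * s by nlinarith]
        ring
      have hnd : ¬ p ∣ s - 1 := by
        intro h
        have h2 := (hiff d').mp h
        have := Nat.le_of_dvd hd'0 h2
        omega
      have he2 : e = padicValNat p (s + 1) := by
        rw [he, ← hsq, padicValNat.mul (by omega) (by omega),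
          padicValNat.eq_zero_of_not_dvd hnd, zero_add]
      have hpes : p ^ e ∣ s + 1 := by rw [he2]; exact pow_padicValNat_dvd
      have hpes_le : p ^ e ≤ s + 1 := Nat.le_of_dvd (by omega) hpes
      rcases Nat.lt_or_ge (p^e) s with hlt | hge
      · left; omega
      · have hps : p ^ e ≠ s := by
          intro h
          apply hpr
          apply hp.out.prime.dvd_of_dvd_pow (n := d')
          rw [← hs, ← h]
          exact dvd_pow_self p (by omega)
        have hpe_eq : p ^ e = s + 1 := by omega
        rcases Nat.lt_or_ge e 2 with he2' | he2''
        · right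
          have he_eq : e = 1 := by omega
          refine ⟨he_eq, ?_⟩
          rw [he_eq, pow_one] at hpe_eq
          omega
        · left
          have h4 := auxL4 (show 2 ≤ p - 1 by omega) he2''
          rw [show p - 1 + 1 = p by omega] at h4
          omega
  · -- d odd
    have hco : Nat.Coprime d 2 := by
      exact hdo.coprime_two_right
    refine ⟨d, e, hd0, he1, ?_, ?_, ?_⟩
    · intro i
      rw [hiff (2*i)]
      exact ⟨fun h => hco.dvd_of_dvd_mul_left h, fun h => h.mul_left 2⟩
    · intro j hj
      have h1 : r ^ (2*(d*j)) - 1 = (r^d)^(2*j) - 1^(2*j) := by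
        rw [one_pow, ← pow_mul]; ring_nf
      rw [h1, padicValNat.pow_sub_pow hodd (by omega : (1:ℕ) < r^d)
        (by simpa using hpd) hpx (by omega : 2*j ≠ 0)]
      have h2 : padicValNat p (2*j) = padicValNat p j := by
        rw [padicValNat.mul two_ne_zero (by omega),
          padicValNat.eq_zero_of_not_dvd (fun h => by
            have := Nat.le_of_dvd (by norm_num) h; omega), zero_add]
      simp [h2, he]
    · left
      omega


/-- **(Inequality (3) of the `C_6` case.)**  Let `q = p ^ f`, let `r` be a prime dividing
`q − 1` and let `m ≥ 1`.  Then `(p − 1)·v_p(∏_{i=1}^m (r^{2i} − 1)) ≤ ε_q·r^m − 1`. -/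
theorem padicValNat_prod_bound (p f r m : ℕ) (hp : p.Prime) (hf : 0 < f)
    (hr : r.Prime) (hdvd : r ∣ p ^ f - 1) (hm : 1 ≤ m) :
    ((p : ℚ) - 1) * padicValNat p (∏ i ∈ Finset.Icc 1 m, (r ^ (2 * i) - 1)) ≤
      epsq p f * r ^ m - 1 := by
  haveI : Fact p.Prime := ⟨hp⟩
  have hp2 := hp.two_le
  have hr2 := hr.two_le
  have hpf2 : 2 ≤ p ^ f := le_trans hp2 (Nat.le_self_pow hf.ne' p)
  have hpr : ¬ p ∣ r := by
    intro h
    have hEq : p = r := (Nat.prime_dvd_prime_iff_eq hp hr).mp h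
    subst hEq
    have h1 : p ∣ p ^ f := dvd_pow_self p hf.ne'
    have h2 := Nat.dvd_sub h1 hdvd
    rw [show p ^ f - (p ^ f - 1) = 1 by omega] at h2
    have := Nat.le_of_dvd one_pos h2
    omega
  have hfac_ne : ∀ i ∈ Icc 1 m, r ^ (2*i) - 1 ≠ 0 := by
    intro i hi
    have hi1 := (Finset.mem_Icc.mp hi).1
    have : 2 ≤ r ^ (2*i) := Nat.one_lt_pow (by omega) (by omega)
    omega
  have hsum0 : padicValNat p (∏ i ∈ Icc 1 m, (r ^ (2*i) - 1)) =
      ∑ i ∈ Icc 1 m, padicValNat p (r ^ (2*i) - 1) := by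
    rw [← Nat.factorization_def _ hp, Nat.factorization_prod hfac_ne]
    simp only [Finset.sum_apply', Nat.factorization_def _ hp]
  rcases hp.eq_two_or_odd' with hp2eq | hodd
  · -- p = 2
    subst hp2eq
    have hrodd : Odd r := by
      rcases Nat.even_or_odd r with he | ho
      · exfalso
        have h1 : (2:ℕ) ∣ r := he.two_dvd
        have h2 : (2:ℕ) ∣ 2 ^ f - 1 := h1.trans hdvd
        have h3 : (2:ℕ) ∣ 2 ^ f := dvd_pow_self 2 hf.ne'
        have h4 := Nat.dvd_sub h3 h2
        rw [show 2 ^ f - (2 ^ f - 1) = 1 by omega] at h4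
        have := Nat.le_of_dvd one_pos h4
        omega
      · exact ho
    have hrm2 := Nat.odd_iff.mp hrodd
    have hr3 : 3 ≤ r := by omega
    have h2r : ¬ 2 ∣ r := by omega
    set a := padicValNat 2 (r+1) + padicValNat 2 (r-1) with ha
    have hval2 : ∀ i, 1 ≤ i → padicValNat 2 (r ^ (2*i) - 1) = a + padicValNat 2 i := by
      intro i hi
      have h1 := padicValNat.pow_two_sub_pow (x := r) (y := 1) (by omega)
        (by omega) h2r (by omega : 2*i ≠ 0) ⟨i, by ring⟩
      rw [one_pow] at h1
      have h2 : padicValNat 2 (2*i) = 1 + padicValNat 2 i := by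
        rw [padicValNat.mul two_ne_zero (by omega), padicValNat.self one_lt_two]
      omega
    have hsum1 : padicValNat 2 (∏ i ∈ Icc 1 m, (r ^ (2*i) - 1)) =
        m * a + padicValNat 2 m.factorial := by
      rw [hsum0, Finset.sum_congr rfl (fun i hi => hval2 i (Finset.mem_Icc.mp hi).1),
        Finset.sum_add_distrib, Finset.sum_const, Nat.card_Icc, aux_sum_padic]
      simp [smul_eq_mul]
    have hfb : padicValNat 2 m.factorial ≤ m - 1 := by
      have := aux_fact_bound 2 m hm
      simpa using this
    have h2a : 2 ^ a ∣ r ^ 2 - 1 := by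
      have d1 : 2^(padicValNat 2 (r+1)) ∣ r + 1 := pow_padicValNat_dvd
      have d2 : 2^(padicValNat 2 (r-1)) ∣ r - 1 := pow_padicValNat_dvd
      have hmul : (r+1)*(r-1) = r^2 - 1 := by
        zify [show 1 ≤ r by omega, show 1 ≤ r^2 from Nat.one_le_pow _ _ (by omega)]
        ring
      rw [ha, pow_add, ← hmul]
      exact mul_dvd_mul d1 d2
    rcases eq_or_ne r 3 with hr3' | hrne3
    · subst hr3'
      have ha3 : a = 3 := by
        rw [ha, show (3+1 : ℕ) = 2^2 from rfl, show (3-1 : ℕ) = 2 from rfl,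
          padicValNat.prime_pow, padicValNat.self one_lt_two]
      have hfe : Even f := by
        by_contra hf'
        rw [Nat.not_even_iff_odd] at hf'
        have h0 : ((2^f - 1 : ℕ) : ZMod 3) = 0 :=
          (ZMod.natCast_eq_zero_iff _ _).mpr hdvd
        rw [Nat.cast_sub Nat.one_le_two_pow] at h0
        push_cast at h0
        rw [show ((2:ZMod 3)) = -1 by decide, hf'.neg_one_pow] at h0
        exact absurd h0 (by decide)
      rw [epsq_two_even f hfe]
      have hVle : padicValNat 2 (∏ i ∈ Icc 1 m, (3 ^ (2*i) - 1)) ≤ 4*m - 1 := by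
        rw [hsum1, ha3]; omega
      have hm3 : m ≤ 3^(m-1) := auxN2 hm (by norm_num)
      have hq1 : ((padicValNat 2 (∏ i ∈ Icc 1 m, (3 ^ (2*i) - 1)) : ℚ)) ≤ 4*m - 1 := by
        have h5 : (((4*m - 1 : ℕ)) : ℚ) = 4*(m:ℚ) - 1 := by
          rw [Nat.cast_sub (by omega)]; push_cast; ring
        rw [← h5]
        exact_mod_cast hVle
      have hq2 : (4:ℚ)*m ≤ 4 * 3^(m-1) := by
        have h6 : (m:ℚ) ≤ (3:ℚ)^(m-1) := by exact_mod_cast hm3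
        linarith
      have hq3 : (4:ℚ)/3 * 3^m = 4 * 3^(m-1) := by
        rw [show (3:ℚ)^m = 3^(m-1) * 3 by rw [← pow_succ]; congr 1; omega]
        ring
      have h2c : ((2:ℕ):ℚ) - 1 = 1 := by norm_num
      rw [h2c, one_mul]
      push_cast
      rw [hq3]
      push_cast at hq1
      linarith
    · have hr5 : 5 ≤ r := by omega
      have hal : a < r := by
        have hr21 : 4 ≤ r^2 := by nlinarith
        have h1 : 2^a ≤ r^2 - 1 := Nat.le_of_dvd (by omega) h2a
        have h2 := auxL2 hr5
        exact (Nat.pow_lt_pow_iff_right one_lt_two).mp (by omega)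
      have hVle : padicValNat 2 (∏ i ∈ Icc 1 m, (r ^ (2*i) - 1)) ≤ r^m - 1 := by
        rw [hsum1]
        have h1 : m*a + m ≤ m*r := by
          have h1' : m*(a+1) ≤ m*r := Nat.mul_le_mul_left _ (by omega)
          have h1'' : m*(a+1) = m*a + m := by ring
          omega
        have h2 : m*r ≤ r^m := auxN2' hm (by omega)
        omega
      exact aux_final 2 r m f _ (by omega) (by omega)
        (by simpa using hVle) (Nat.one_le_pow _ _ (by omega)) (epsq_one_le 2 f (by omega))
  · -- p odd
    obtain ⟨d', e, hd'0, he1, hiff2, hval, hkey⟩ := aux_key p r hodd hr2 hpr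
    have hp3 : 3 ≤ p := by
      rcases hodd with ⟨t, ht⟩; omega
    have hvan : ∀ i, 1 ≤ i → ¬ d' ∣ i → padicValNat p (r ^ (2*i) - 1) = 0 := by
      intro i hi hni
      exact padicValNat.eq_zero_of_not_dvd (fun h => hni ((hiff2 i).mp h))
    set k := m / d' with hk
    have hsum1 : padicValNat p (∏ i ∈ Icc 1 m, (r ^ (2*i) - 1)) =
        k * e + padicValNat p k.factorial := by
      rw [hsum0, aux_sum_mult _ d' hd'0 hvan m,
        Finset.sum_congr rfl (fun j hj => hval j (Finset.mem_Icc.mp hj).1),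
        Finset.sum_add_distrib, Finset.sum_const, Nat.card_Icc, aux_sum_padic]
      simp [smul_eq_mul, hk]
    have heps := epsq_one_le p f hp2
    have hdk : d' * k ≤ m := by
      rw [hk, mul_comm]
      exact Nat.div_mul_le_self m d'
    have hrm1 : 1 ≤ r ^ m := Nat.one_le_pow _ _ (by omega)
    rcases Nat.eq_zero_or_pos k with hk0 | hk1
    · apply aux_final p r m f _ hp.one_le (by omega) ?_ hrm1 heps
      rw [hsum1, hk0]
      simp
    · have hfb := aux_fact_bound p k hk1
      have hs2 : 2 ≤ r ^ d' := Nat.one_lt_pow hd'0.ne' (by omega)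
      have hmain : (p-1) * (k*e + padicValNat p k.factorial) ≤ k * (e*(p-1)+1) - 1 := by
        have h1 : (p-1)*(k*e + padicValNat p k.factorial)
            = k*e*(p-1) + (p-1)*padicValNat p k.factorial := by ring
        have h2 : k*(e*(p-1)+1) = k*e*(p-1) + k := by ring
        omega
      have hsk : (r ^ d') ^ k ≤ r ^ m := by
        rw [← pow_mul]
        exact Nat.pow_le_pow_right (by omega) (by rw [mul_comm] at hdk ⊢; omega)
      rcases hkey with hA | ⟨heq1, hpf⟩
      · apply aux_final p r m f _ hp.one_le (by omega) ?_ hrm1 heps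
        rw [hsum1]
        have h3 : k * (e*(p-1)+1) ≤ k * (r^d' - 1) := Nat.mul_le_mul_left _ hA
        have h4 : k * (r^d' - 1) ≤ (r^d')^k := auxN1 hk1 hs2
        omega
      · -- Fermat case
        have hferm : ∃ n, p = 2^(2^n) + 1 := by
          have hre : r = 2 := by
            have hev : Even (r ^ d') := by
              rcases hodd with ⟨t, ht⟩
              exact ⟨t, by omega⟩
            have h7 : Even r := (Nat.even_pow.mp hev).1
            rcases hr.eq_one_or_self_of_dvd 2 h7.two_dvd with h | h
            · omega
            · omega
          obtain ⟨t, ht⟩ := Nat.pow_of_pow_add_prime one_lt_two hd'0.ne'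
            (by rw [← hre, ← hpf]; exact hp)
          exact ⟨t, by rw [hpf, hre, ht]⟩
        have hepsf := epsq_fermat p f (by omega) hferm
        have h5 : k * (p-1) ≤ r^m := by
          have h6 : k * (r^d') ≤ (r^d')^k := auxN2' hk1 hs2
          have h7 : p - 1 = r^d' := by omega
          rw [h7]
          omega
        have hV : (p-1) * padicValNat p (∏ i ∈ Icc 1 m, (r ^ (2*i) - 1)) ≤ k * p - 1 := by
          rw [hsum1]
          have h9 : k*(e*(p-1)+1) = k*p := by
            rw [heq1]
            have : 1*(p-1)+1 = p := by omega
            rw [this]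
          omega
        rw [hepsf]
        set V := padicValNat p (∏ i ∈ Icc 1 m, (r ^ (2*i) - 1)) with hVdef
        have hcast : (((p-1) * V : ℕ) : ℚ) = ((p:ℚ)-1) * V := by
          rw [Nat.cast_mul, Nat.cast_sub hp.one_le]; push_cast; ring
        rw [← hcast]
        have hkp1 : 1 ≤ k * p := Nat.mul_pos hk1 (by omega)
        have h10 : (((k*p - 1 : ℕ)) : ℚ) = (k:ℚ)*p - 1 := by
          rw [Nat.cast_sub hkp1]; push_cast; ring
        have h11 : (((p-1)*V : ℕ) : ℚ) ≤ (k:ℚ)*p - 1 := by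
          rw [← h10]
          exact_mod_cast hV
        have h12 : (k:ℚ)*((p:ℚ)-1) ≤ (r:ℚ)^m := by
          have : ((k*(p-1) : ℕ) : ℚ) ≤ ((r^m : ℕ) : ℚ) := Nat.cast_le.mpr h5
          rw [Nat.cast_mul, Nat.cast_sub hp.one_le] at this
          push_cast at this ⊢
          linarith
        have hppos : (0:ℚ) < (p:ℚ) - 1 := by
          have : (3:ℚ) ≤ p := by exact_mod_cast hp3
          linarith
        have h13 : (k:ℚ)*p ≤ (p:ℚ)/((p:ℚ)-1) * (r:ℚ)^m := by
          rw [div_mul_eq_mul_div, le_div_iff₀ hppos]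
          have hp0 : (0:ℚ) ≤ p := by positivity
          calc (k:ℚ)*p*((p:ℚ)-1) = (p:ℚ)*((k:ℚ)*((p:ℚ)-1)) := by ring
          _ ≤ (p:ℚ)*(r:ℚ)^m := by
              apply mul_le_mul_of_nonneg_left h12 hp0
          _ = (p:ℚ)*(r:ℚ)^m := rfl
        push_cast
        push_cast at h11 h13
        linarith
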